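/- Suppose ξ̃ satisfies the bilinear system, and let T(f₂) := −ξ̃_{0,1,2}ξ̃_{1,1,1}/(ξ̃_{0,1,1}ξ̃_{1,1,2}) (the value of f₂ with all third indices shifted by +1). Then f₂·T(f₂)·(a₁a₂f₁f₂ + a₁f₁ + x²q²) = x²q²·(a₁a₂f₁f₂ + a₁f₁ + 1). -/

import Mathlib

noncomputable section

/-- The bilinear system (11)–(18) for a nowhere-vanishing `ξ̃ : ℤ³ → ℂ`. -/
def BilinearSystem (q a1 a2 x : ℂ) (ξ : ℤ → ℤ → ℤ → ℂ) : Prop :=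
  ∀ a b c : ℤ,
    (q ^ (a - b - c) / (a1 * a2) * ξ (a+1) (b+1) c * ξ a b (c+1) -
        x ^ 2 * q ^ c * ξ (a+1) (b+1) (c+1) * ξ a b c +
        a2 * x * q ^ b * ξ (a+1) b c * ξ a (b+1) (c+1) = 0) ∧
    (x ^ 2 * q ^ (a - b + 2*c) / (a1 * a2) * ξ (a+1) (b+1) c * ξ a b (c-1) -
        ξ (a+1) (b+1) (c-1) * ξ a b c +
        a2 * x * q ^ (b + c) * ξ (a+1) b c * ξ a (b+1) (c-1) = 0) ∧
    (a1 * a2 * x * q ^ (b + c) * ξ (a+1) (b+2) c * ξ a b (c-1) -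
        q ^ a * ξ (a+1) (b+1) (c-1) * ξ a (b+1) c +
        q ^ (a - b) / a2 * ξ (a+1) (b+1) c * ξ a (b+1) (c-1) = 0) ∧
    (a1 * a2 * q ^ (b - c) * ξ (a+1) (b+2) c * ξ a b (c+1) -
        x * q ^ a * ξ (a+1) (b+1) (c+1) * ξ a (b+1) c +
        x * q ^ (a - b) / a2 * ξ (a+1) (b+1) c * ξ a (b+1) (c+1) = 0) ∧
    (q ^ (a - c) * ξ (a+2) (b+1) c * ξ a b (c+1) -
        a1 * x ^ 2 * q ^ c * ξ (a+2) (b+1) (c+1) * ξ a b c +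
        a1 * a2 * x * q ^ b * ξ (a+1) (b+1) (c+1) * ξ (a+1) b c = 0) ∧
    (x ^ 2 * q ^ (a + c) * ξ (a+2) (b+1) c * ξ a b (c-1) -
        a1 * q ^ (-c) * ξ (a+2) (b+1) (c-1) * ξ a b c +
        a1 * a2 * x * q ^ b * ξ (a+1) (b+1) (c-1) * ξ (a+1) b c = 0) ∧
    (a1 * a2 * x * ξ a b c * ξ (a+1) (b+2) c -
        q ^ (2*a - 2*b - c) / (a1 * a2) * ξ (a+1) (b+1) c * ξ a (b+1) c +
        q ^ (2*a - b - c) / a1 * ξ a (b+1) (c+1) * ξ (a+1) (b+1) (c-1) = 0) ∧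
    (a1 * a2 * ξ a b c * ξ (a+1) (b+2) c -
        x * q ^ (2*a - 2*b + c) / (a1 * a2) * ξ (a+1) (b+1) c * ξ a (b+1) c +
        x * q ^ (2*a + 2*b + c) / a1 * ξ a (b+1) (c-1) * ξ (a+1) (b+1) (c+1) = 0)

theorem painleve_T_f2 (q a1 a2 x : ℂ) (hq : q ≠ 0) (ha1 : a1 ≠ 0) (ha2 : a2 ≠ 0) (hx : x ≠ 0)
    (ξ : ℤ → ℤ → ℤ → ℂ) (hξ : ∀ a b c : ℤ, ξ a b c ≠ 0)
    (hbil : BilinearSystem q a1 a2 x ξ) (f1 f2 : ℂ)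
    (hf1 : f1 = ξ 0 0 1 * ξ 0 1 0 / (ξ 0 0 0 * ξ 0 1 1))
    (hf2 : f2 = -(ξ 0 1 1 * ξ 1 1 0) / (ξ 0 1 0 * ξ 1 1 1))
    (Tf2 : ℂ) (hTf2 : Tf2 = -(ξ 0 1 2 * ξ 1 1 1) / (ξ 0 1 1 * ξ 1 1 2)) :
    f2 * Tf2 * (a1 * a2 * f1 * f2 + a1 * f1 + x ^ 2 * q ^ 2) =
      x ^ 2 * q ^ 2 * (a1 * a2 * f1 * f2 + a1 * f1 + 1) := by
  have h3 := (hbil 0 0 1).2.2.1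
  have h7 := (hbil 0 0 1).2.2.2.2.2.2.1
  have h8 := (hbil 0 0 1).2.2.2.2.2.2.2
  norm_num at h3 h7 h8
  field_simp at h3 h7 h8
  subst hf1 hf2 hTf2
  field_simp [hξ 0 0 0, hξ 0 0 1, hξ 0 1 0, hξ 0 1 1, hξ 0 1 2, hξ 1 1 0, hξ 1 1 1, hξ 1 1 2]
  linear_combination (a1 * ξ 0 0 1 * (ξ 0 1 2 * ξ 1 1 0 - ξ 0 1 0 * ξ 1 1 2 * x ^ 2 * q ^ 2)) * h3 + (ξ 0 0 0 * ξ 0 1 0 * ξ 1 1 2 * x ^ 2 * q ^ 2) * h7 - (ξ 0 0 0 * ξ 0 1 2 * ξ 1 1 0 * x * q) * h8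


end
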